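/- Let x ≤ y ≤ z be real numbers and a_n ∈ ℂ for integers n with x ≤ n < z. Then |∑_{x ≤ n < y} a_n| ≤ ∫_0^1 min(⌈y⌉ - x, 1/(2‖ξ‖)) · |∑_{x ≤ n < z} a_n e(nξ)| dξ, where e(t) = exp(2πit) and ‖ξ‖ is the distance to the nearest integer. -/

import Mathlib

open Finset intervalIntegral MeasureTheory

lemma aux_orth (k : ℤ) : (∫ ξ in (0:ℝ)..1, Complex.exp (2*Real.pi*Complex.I*(k:ℂ)*(ξ:ℂ)))
    = if k = 0 then 1 else 0 := by
  rcases eq_or_ne k 0 with rfl | hk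
  · simp
  · rw [if_neg hk]
    have hc : (2*Real.pi*Complex.I*(k:ℂ)) ≠ 0 := by
      simp [Real.pi_ne_zero, Complex.I_ne_zero, hk]
    rw [integral_exp_mul_complex hc]
    have h1 : Complex.exp (2*Real.pi*Complex.I*(k:ℂ)*(1:ℝ)) = 1 := by
      rw [show (2*(Real.pi:ℂ)*Complex.I*(k:ℂ)*((1:ℝ):ℂ)) = (k:ℂ) * (2*Real.pi*Complex.I) by push_cast; ring]
      exact Complex.exp_int_mul_two_pi_mul_I k
    rw [h1]
    simp

lemma aux_abs_exp_sub_one (θ : ℝ) :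
    ‖Complex.exp ((θ:ℂ) * Complex.I) - 1‖ = 2 * |Real.sin (θ/2)| := by
  rw [Complex.exp_mul_I]
  have : (Complex.cos θ + Complex.sin θ * Complex.I - 1)
      = Complex.ofReal (Real.cos θ - 1) + Complex.ofReal (Real.sin θ) * Complex.I := by
    push_cast; ring
  rw [this, Complex.norm_add_mul_I]
  have h : (Real.cos θ - 1)^2 + (Real.sin θ)^2 = (2 * |Real.sin (θ/2)|)^2 := by
    have h1 : Real.sin (θ/2)^2 = (1 - Real.cos θ)/2 := by
      have h0 : Real.cos θ = 2 * Real.cos (θ/2)^2 - 1 := by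
        have := Real.cos_two_mul (θ/2)
        rw [show 2*(θ/2) = θ by ring] at this
        linarith
      have h2 := Real.sin_sq_add_cos_sq (θ/2)
      nlinarith
    have h3 : |Real.sin (θ/2)|^2 = Real.sin (θ/2)^2 := sq_abs _
    have h4 := Real.sin_sq_add_cos_sq θ
    nlinarith
  rw [h, Real.sqrt_sq (by positivity)]

lemma aux_sin_lower (ξ : ℝ) : 2 * |ξ - round ξ| ≤ |Real.sin (Real.pi * ξ)| := by
  set u : ℝ := ξ - round ξ with hu
  have h1 : Real.pi * ξ = Real.pi * u + (round ξ) * Real.pi := by rw [hu]; ring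
  rw [h1, Real.sin_add_int_mul_pi, abs_mul]
  have hone : |((-1:ℝ)) ^ (round ξ)| = 1 := by
    rcases Int.even_or_odd (round ξ) with he | ho
    · rw [he.neg_one_zpow]; simp
    · rw [ho.neg_one_zpow]; simp
  rw [hone, one_mul]
  have h3 : |u| ≤ 1/2 := abs_sub_round ξ
  have h2 : |Real.sin (Real.pi * u)| = Real.sin (Real.pi * |u|) := by
    rcases abs_cases u with ⟨h, hpos⟩ | ⟨h, hneg⟩
    · rw [h, abs_of_nonneg]
      apply Real.sin_nonneg_of_nonneg_of_le_pi
      · positivity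
      · nlinarith [Real.pi_pos, h3, h]
    · rw [h, mul_neg, Real.sin_neg, abs_of_nonpos]
      apply Real.sin_nonpos_of_nonpos_of_neg_pi_le
      · nlinarith [Real.pi_pos]
      · nlinarith [Real.pi_pos, h3, h]
  rw [h2]
  have := Real.mul_le_sin (x := Real.pi * |u|) (by positivity)
    (by nlinarith [Real.pi_pos])
  calc 2 * |u| = 2 / Real.pi * (Real.pi * |u|) := by
        field_simp
    _ ≤ Real.sin (Real.pi * |u|) := this

lemma aux_telescope (w : ℂ) (hw : w ≠ 0) (c : ℤ) :
    ∀ b : ℤ, c ≤ b → (w - 1) * ∑ m ∈ Finset.Ico c b, w ^ m = w ^ b - w ^ c := by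
  refine Int.le_induction ?_ ?_
  · simp
  · intro b hb ih
    have hins : Finset.Ico c (b+1) = insert b (Finset.Ico c b) := by
      ext m; simp; omega
    rw [hins, Finset.sum_insert (by simp), mul_add, ih, zpow_add_one₀ hw]
    ring

lemma aux_abs_sum_le_card (x y : ℝ) (hxy : x ≤ y) (ξ : ℝ) :
    ‖∑ m ∈ Finset.Ico ⌈x⌉ ⌈y⌉,
      Complex.exp (-(2*Real.pi*Complex.I*(m:ℂ)*(ξ:ℂ)))‖ ≤ (⌈y⌉:ℝ) - x := by
  calc ‖∑ m ∈ Finset.Ico ⌈x⌉ ⌈y⌉, Complex.exp (-(2*Real.pi*Complex.I*(m:ℂ)*(ξ:ℂ)))‖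
      ≤ ∑ m ∈ Finset.Ico ⌈x⌉ ⌈y⌉,
          ‖Complex.exp (-(2*Real.pi*Complex.I*(m:ℂ)*(ξ:ℂ)))‖ := by
        exact norm_sum_le _ _
    _ = ∑ m ∈ Finset.Ico ⌈x⌉ ⌈y⌉, 1 := by
        apply Finset.sum_congr rfl
        intro m _
        rw [show (-(2*(Real.pi:ℂ)*Complex.I*(m:ℂ)*(ξ:ℂ))) = ((-(2*Real.pi*m*ξ) : ℝ):ℂ) * Complex.I
          by push_cast; ring]
        exact Complex.norm_exp_ofReal_mul_I _
    _ = ((⌈y⌉ - ⌈x⌉).toNat : ℝ) := by rw [Finset.sum_const, Int.card_Ico]; simp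
    _ ≤ (⌈y⌉:ℝ) - x := by
        rcases le_or_gt ⌈x⌉ ⌈y⌉ with h | h
        · have e : ((⌈y⌉ - ⌈x⌉).toNat : ℝ) = (⌈y⌉:ℝ) - (⌈x⌉:ℝ) := by
            have h2 := Int.toNat_of_nonneg (show (0:ℤ) ≤ ⌈y⌉ - ⌈x⌉ by omega)
            exact_mod_cast congrArg (Int.cast : ℤ → ℝ) h2
          rw [e]
          have := Int.le_ceil x
          linarith
        · rw [Int.toNat_of_nonpos (by omega : ⌈y⌉ - ⌈x⌉ ≤ (0:ℤ))]
          have h1 := Int.le_ceil y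
          simp only [Nat.cast_zero]
          linarith

lemma aux_D_bound (x y : ℝ) (hxy : x ≤ y) (ξ : ℝ) :
    ‖∑ m ∈ Finset.Ico ⌈x⌉ ⌈y⌉,
      Complex.exp (-(2*Real.pi*Complex.I*(m:ℂ)*(ξ:ℂ)))‖ ≤
      (if |ξ - round ξ| = 0 then ((⌈y⌉:ℝ) - x)
        else min ((⌈y⌉:ℝ) - x) (1 / (2 * |ξ - round ξ|))) := by
  have hA : (0:ℝ) ≤ (⌈y⌉:ℝ) - x := by
    have := Int.le_ceil y; linarith
  have hb1 := aux_abs_sum_le_card x y hxy ξ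
  set t : ℝ := |ξ - round ξ| with ht
  rcases eq_or_ne t 0 with h0 | h0
  · rw [if_pos h0]; exact hb1
  · rw [if_neg h0]
    refine le_min hb1 ?_
    have ht0 : 0 < t := lt_of_le_of_ne (abs_nonneg _) (Ne.symm h0)
    set w : ℂ := Complex.exp (-(2*Real.pi*Complex.I*(ξ:ℂ))) with hwdef
    have hw0 : w ≠ 0 := Complex.exp_ne_zero _
    have hterm : ∀ m : ℤ, Complex.exp (-(2*Real.pi*Complex.I*(m:ℂ)*(ξ:ℂ))) = w ^ m := by
      intro m
      rw [hwdef, ← Complex.exp_int_mul]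
      congr 1
      push_cast; ring
    have habsw : ∀ m : ℤ, ‖w ^ m‖ = 1 := by
      intro m
      rw [norm_zpow, hwdef]
      rw [show (-(2*(Real.pi:ℂ)*Complex.I*(ξ:ℂ))) = ((-(2*Real.pi*ξ) : ℝ):ℂ) * Complex.I
        by push_cast; ring]
      rw [Complex.norm_exp_ofReal_mul_I]
      simp
    have hw1e : ‖w - 1‖ = 2 * |Real.sin (Real.pi * ξ)| := by
      rw [hwdef, show (-(2*(Real.pi:ℂ)*Complex.I*(ξ:ℂ))) = ((-(2*Real.pi*ξ) : ℝ):ℂ) * Complex.I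
        by push_cast; ring]
      rw [aux_abs_exp_sub_one]
      rw [show -(2*Real.pi*ξ)/2 = -(Real.pi * ξ) by ring, Real.sin_neg, abs_neg]
    have hw1lb : 4 * t ≤ ‖w - 1‖ := by
      rw [hw1e]
      have := aux_sin_lower ξ
      rw [← ht] at this
      linarith
    simp_rw [hterm]
    rcases le_or_gt ⌈y⌉ ⌈x⌉ with h | h
    · rw [Finset.Ico_eq_empty (by omega)]
      simp; positivity
    · have htel := aux_telescope w hw0 ⌈x⌉ ⌈y⌉ h.le
      have : ‖(w-1) * ∑ m ∈ Finset.Ico ⌈x⌉ ⌈y⌉, w ^ m‖ ≤ 2 := by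
        rw [htel]
        calc ‖w ^ ⌈y⌉ - w ^ ⌈x⌉‖
            ≤ ‖w ^ ⌈y⌉‖ + ‖w ^ ⌈x⌉‖ := by
              exact norm_sub_le _ _
          _ = 2 := by rw [habsw, habsw]; norm_num
      rw [norm_mul] at this
      have hw1pos : 0 < ‖w - 1‖ := by nlinarith [hw1lb, ht0]
      have h2 : ‖∑ m ∈ Finset.Ico ⌈x⌉ ⌈y⌉, w ^ m‖ ≤ 2 / ‖w - 1‖ := by
        rw [le_div_iff₀ hw1pos]
        linarith [this]
      refine h2.trans ?_
      rw [div_le_div_iff₀ hw1pos (by positivity)]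
      nlinarith [hw1lb, ht0]

/-- Lemma extending a summation range via an integral (Vinogradov-type). -/
theorem thm5 (x y z : ℝ) (hxy : x ≤ y) (hyz : y ≤ z) (a : ℤ → ℂ) :
    ‖∑ n ∈ Finset.Ico ⌈x⌉ ⌈y⌉, a n‖ ≤
      ∫ ξ in (0:ℝ)..1,
        (if |ξ - round ξ| = 0 then ((⌈y⌉ : ℝ) - x)
          else min ((⌈y⌉ : ℝ) - x) (1 / (2 * |ξ - round ξ|))) *
          ‖∑ n ∈ Finset.Ico ⌈x⌉ ⌈z⌉,
            a n * Complex.exp (2 * Real.pi * Complex.I * (n : ℝ) * (ξ : ℝ))‖ := by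
  have hbd : ⌈y⌉ ≤ ⌈z⌉ := Int.ceil_le_ceil hyz
  set S : ℝ → ℂ := fun ξ => ∑ n ∈ Finset.Ico ⌈x⌉ ⌈z⌉,
      a n * Complex.exp (2 * Real.pi * Complex.I * (n : ℝ) * (ξ : ℝ)) with hS
  set D : ℝ → ℂ := fun ξ => ∑ m ∈ Finset.Ico ⌈x⌉ ⌈y⌉,
      Complex.exp (-(2*Real.pi*Complex.I*(m:ℂ)*(ξ:ℂ))) with hD
  set F : ℝ → ℝ := fun ξ => if |ξ - round ξ| = 0 then ((⌈y⌉ : ℝ) - x)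
      else min ((⌈y⌉ : ℝ) - x) (1 / (2 * |ξ - round ξ|)) with hF
  have hA : (0:ℝ) ≤ (⌈y⌉:ℝ) - x := by have := Int.le_ceil y; linarith
  -- continuity
  have hScont : Continuous S := by
    apply continuous_finset_sum
    intro n _
    exact continuous_const.mul (Complex.continuous_exp.comp (by fun_prop))
  have hDcont : Continuous D := by
    apply continuous_finset_sum
    intro m _
    exact Complex.continuous_exp.comp (by fun_prop)
  -- orthogonality computation
  have key : (∫ ξ in (0:ℝ)..1, S ξ * D ξ) = ∑ n ∈ Finset.Ico ⌈x⌉ ⌈y⌉, a n := by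
    have expand : ∀ ξ : ℝ, S ξ * D ξ = ∑ n ∈ Finset.Ico ⌈x⌉ ⌈z⌉, ∑ m ∈ Finset.Ico ⌈x⌉ ⌈y⌉,
        a n * Complex.exp (2*Real.pi*Complex.I*(((n - m : ℤ)):ℂ)*(ξ:ℂ)) := by
      intro ξ
      rw [hS, hD, Finset.sum_mul]
      refine Finset.sum_congr rfl fun n _ => ?_
      rw [Finset.mul_sum]
      refine Finset.sum_congr rfl fun m _ => ?_
      rw [mul_assoc, ← Complex.exp_add]
      congr 2
      push_cast; ring
    simp only [expand]
    rw [intervalIntegral.integral_finset_sum]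
    swap
    · intro n _
      apply Continuous.intervalIntegrable
      apply continuous_finset_sum
      intro m _
      exact continuous_const.mul (Complex.continuous_exp.comp (by fun_prop))
    have inner : ∀ n : ℤ, (∫ ξ in (0:ℝ)..1, ∑ m ∈ Finset.Ico ⌈x⌉ ⌈y⌉,
        a n * Complex.exp (2*Real.pi*Complex.I*(((n - m : ℤ)):ℂ)*(ξ:ℂ)))
        = if n ∈ Finset.Ico ⌈x⌉ ⌈y⌉ then a n else 0 := by
      intro n
      rw [intervalIntegral.integral_finset_sum]
      swap
      · intro m _
        apply Continuous.intervalIntegrable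
        exact continuous_const.mul (Complex.continuous_exp.comp (by fun_prop))
      have : ∀ m ∈ Finset.Ico ⌈x⌉ ⌈y⌉,
          (∫ ξ in (0:ℝ)..1, a n * Complex.exp (2*Real.pi*Complex.I*(((n - m : ℤ)):ℂ)*(ξ:ℂ)))
          = if n = m then a n else 0 := by
        intro m _
        rw [intervalIntegral.integral_const_mul, aux_orth (n - m)]
        simp [sub_eq_zero]
      rw [Finset.sum_congr rfl this, Finset.sum_ite_eq]
    rw [Finset.sum_congr rfl (fun n _ => inner n), Finset.sum_ite_mem,
      Finset.inter_eq_right.mpr (Finset.Ico_subset_Ico_right hbd)]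
  -- measure-theoretic bounds
  set M : ℝ := ∑ n ∈ Finset.Ico ⌈x⌉ ⌈z⌉, ‖a n‖ with hM
  have hSle : ∀ ξ : ℝ, ‖S ξ‖ ≤ M := by
    intro ξ
    refine (norm_sum_le _ _).trans ?_
    apply Finset.sum_le_sum
    intro n _
    rw [norm_mul, show (2*(Real.pi:ℂ)*Complex.I*((n:ℝ):ℂ)*((ξ:ℝ):ℂ))
        = ((2*Real.pi*n*ξ : ℝ):ℂ) * Complex.I by push_cast; ring,
      Complex.norm_exp_ofReal_mul_I, mul_one]
  have hFb : ∀ ξ : ℝ, 0 ≤ F ξ ∧ F ξ ≤ (⌈y⌉:ℝ) - x := by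
    intro ξ
    simp only [hF]
    rcases eq_or_ne |ξ - round ξ| 0 with h | h
    · rw [if_pos h]; exact ⟨hA, le_refl _⟩
    · rw [if_neg h]
      have : 0 < |ξ - round ξ| := lt_of_le_of_ne (abs_nonneg _) (Ne.symm h)
      exact ⟨le_min hA (by positivity), min_le_left _ _⟩
  have hFmeas : Measurable F := by
    have ht : Measurable fun ξ : ℝ => |ξ - (round ξ : ℝ)| := by
      have e : (fun ξ : ℝ => ξ - (round ξ : ℝ)) = fun ξ => Int.fract (ξ + 1/2) - 1/2 := by
        funext ξ
        rw [round_eq, Int.fract]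
        push_cast; ring
      have : Measurable fun ξ : ℝ => ξ - (round ξ : ℝ) := by
        rw [e]; exact (measurable_fract.comp (measurable_id.add_const _)).sub_const _
      exact this.abs
    rw [hF]
    apply Measurable.ite
    · exact ht (measurableSet_singleton 0)
    · exact measurable_const
    · apply Measurable.min measurable_const
      have : Measurable fun ξ : ℝ => 2 * |ξ - (round ξ : ℝ)| := ht.const_mul 2
      simpa [one_div, Pi.inv_def] using this.inv
  have hint2 : IntervalIntegrable (fun ξ => F ξ * ‖S ξ‖) MeasureTheory.volume 0 1 := by
    rw [intervalIntegrable_iff_integrableOn_Ioc_of_le zero_le_one]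
    apply MeasureTheory.Integrable.mono'
      (g := fun _ => ((⌈y⌉:ℝ) - x) * M)
    · exact MeasureTheory.integrableOn_const measure_Ioc_lt_top.ne
    · exact (hFmeas.mul (continuous_norm.comp hScont).measurable).aestronglyMeasurable
    · apply MeasureTheory.ae_of_all
      intro ξ
      rw [Real.norm_eq_abs, abs_of_nonneg (mul_nonneg (hFb ξ).1 (norm_nonneg _))]
      exact mul_le_mul (hFb ξ).2 (hSle ξ) (norm_nonneg _) hA
  have hint1 : IntervalIntegrable (fun ξ => ‖S ξ * D ξ‖) MeasureTheory.volume 0 1 :=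
    ((hScont.mul hDcont).norm).intervalIntegrable _ _
  calc ‖∑ n ∈ Finset.Ico ⌈x⌉ ⌈y⌉, a n‖
      = ‖∫ ξ in (0:ℝ)..1, S ξ * D ξ‖ := by rw [key]
    _ ≤ ∫ ξ in (0:ℝ)..1, ‖S ξ * D ξ‖ :=
        intervalIntegral.norm_integral_le_integral_norm zero_le_one
    _ ≤ ∫ ξ in (0:ℝ)..1, F ξ * ‖S ξ‖ := by
        apply intervalIntegral.integral_mono_on zero_le_one hint1 hint2
        intro ξ _
        rw [norm_mul, mul_comm]
        exact mul_le_mul_of_nonneg_right (aux_D_bound x y hxy ξ) (norm_nonneg _)
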